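/- Every finite 3-regular graph G = (V, E) admits a proper encoding: a function assigning to each vertex v a word w(v) of length 4 over the alphabet V such that (w(v))_1 = v, the multiset {(w(v))_2, (w(v))_3, (w(v))_4} equals the set of neighbors of v, and for every vertex u and every position p ∈ {1,2,3,4} there is exactly one vertex v with (w(v))_p = u. -/
import Mathlib

open Finset

private lemma hall_step {V : Type*} [Fintype V] [DecidableEq V] (k : ℕ) (hk : 0 < k)
    (t : V → Finset V) (hrow : ∀ v, (t v).card = k)
    (hcol : ∀ u, (univ.filter (fun v => u ∈ t v)).card = k) :
    ∃ f : V → V, Function.Injective f ∧ (∀ v, f v ∈ t v) ∧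
      (∀ v, ((t v).erase (f v)).card = k - 1) ∧
      (∀ u, (univ.filter (fun v => u ∈ (t v).erase (f v))).card = k - 1) := by
  have hall : ∀ s : Finset V, s.card ≤ (s.biUnion t).card := by
    intro s
    have key : s.card * k ≤ (s.biUnion t).card * k := by
      calc s.card * k = ∑ v ∈ s, (t v).card := by
            simp [hrow, mul_comm]
        _ = ∑ v ∈ s, ∑ u ∈ s.biUnion t, (if u ∈ t v then 1 else 0) := by
            refine Finset.sum_congr rfl fun v hv => ?_
            rw [Finset.sum_ite_mem, Finset.sum_const]
            have : s.biUnion t ∩ t v = t v :=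
              Finset.inter_eq_right.mpr (Finset.subset_biUnion_of_mem t hv)
            simp [this]
        _ = ∑ u ∈ s.biUnion t, ∑ v ∈ s, (if u ∈ t v then 1 else 0) := Finset.sum_comm
        _ = ∑ u ∈ s.biUnion t, (s.filter (fun v => u ∈ t v)).card :=
            Finset.sum_congr rfl fun u _ => (Finset.card_filter _ _).symm
        _ ≤ ∑ _u ∈ s.biUnion t, k := by
            refine Finset.sum_le_sum fun u _ => ?_
            calc (s.filter (fun v => u ∈ t v)).card
                ≤ (univ.filter (fun v => u ∈ t v)).card :=
                  Finset.card_le_card (Finset.filter_subset_filter _ (Finset.subset_univ s))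
              _ = k := hcol u
        _ = (s.biUnion t).card * k := by simp [mul_comm]
    exact Nat.le_of_mul_le_mul_right key hk
  obtain ⟨f, hfinj, hft⟩ := (Finset.all_card_le_biUnion_card_iff_exists_injective t).mp hall
  have hfsurj : Function.Surjective f := Finite.surjective_of_injective hfinj
  refine ⟨f, hfinj, hft, fun v => by rw [Finset.card_erase_of_mem (hft v), hrow], ?_⟩
  intro u
  obtain ⟨v₀, hv₀⟩ := hfsurj u
  have hset : (univ.filter (fun v => u ∈ (t v).erase (f v)))
      = (univ.filter (fun v => u ∈ t v)).erase v₀ := by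
    ext v
    simp only [Finset.mem_filter, Finset.mem_erase, Finset.mem_univ, true_and]
    constructor
    · rintro ⟨hne, hmem⟩
      exact ⟨fun h => hne (h ▸ hv₀.symm), hmem⟩
    · rintro ⟨hne, hmem⟩
      refine ⟨fun h => hne ?_, hmem⟩
      exact (hfinj (hv₀.trans h)).symm
  rw [hset, Finset.card_erase_of_mem, hcol]
  simp only [Finset.mem_filter, Finset.mem_univ, true_and]
  exact hv₀ ▸ hft v₀

/-- Every finite 3-regular graph admits a proper encoding: an assignment of a word
`w v : Fin 4 → V` to each vertex `v`, whose first letter is `v`, whose remaining letters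
are exactly the neighbors of `v`, and such that every vertex label appears in each of the
four positions in exactly one word. -/
theorem exists_proper_encoding {V : Type*} [Fintype V] [DecidableEq V]
    (G : SimpleGraph V) [DecidableRel G.Adj] (hreg : G.IsRegularOfDegree 3) :
    ∃ w : V → Fin 4 → V,
      (∀ v, w v 0 = v) ∧
      (∀ v, ({w v 1, w v 2, w v 3} : Finset V) = G.neighborFinset v) ∧
      (∀ (u : V) (p : Fin 4), ∃! v, w v p = u) := by
  set t₀ : V → Finset V := fun v => G.neighborFinset v with ht₀
  have hrow₀ : ∀ v, (t₀ v).card = 3 := fun v => hreg v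
  have hcol₀ : ∀ u, (univ.filter (fun v => u ∈ t₀ v)).card = 3 := by
    intro u
    have : (univ.filter (fun v => u ∈ t₀ v)) = G.neighborFinset u := by
      ext v
      simp [ht₀, G.adj_comm]
    rw [this]; exact hreg u
  obtain ⟨f₁, hinj₁, hmem₁, hrow₁, hcol₁⟩ := hall_step 3 (by norm_num) t₀ hrow₀ hcol₀
  set t₁ : V → Finset V := fun v => (t₀ v).erase (f₁ v)
  obtain ⟨f₂, hinj₂, hmem₂, hrow₂, hcol₂⟩ := hall_step 2 (by norm_num) t₁ hrow₁ hcol₁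
  set t₂ : V → Finset V := fun v => (t₁ v).erase (f₂ v)
  obtain ⟨f₃, hinj₃, hmem₃, _, _⟩ := hall_step 1 (by norm_num) t₂ hrow₂ hcol₂
  refine ⟨fun v => ![v, f₁ v, f₂ v, f₃ v], fun v => rfl, ?_, ?_⟩
  · intro v
    have h2 : f₂ v ∈ t₀ v ∧ f₂ v ≠ f₁ v := by
      have := hmem₂ v
      rw [Finset.mem_erase] at this
      exact ⟨this.2, this.1⟩
    have h3 : f₃ v ∈ t₀ v ∧ f₃ v ≠ f₁ v ∧ f₃ v ≠ f₂ v := by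
      have := hmem₃ v
      rw [Finset.mem_erase, Finset.mem_erase] at this
      exact ⟨this.2.2, this.2.1, this.1⟩
    have hsub : ({f₁ v, f₂ v, f₃ v} : Finset V) ⊆ t₀ v := by
      intro x hx
      simp only [Finset.mem_insert, Finset.mem_singleton] at hx
      rcases hx with rfl | rfl | rfl
      exacts [hmem₁ v, h2.1, h3.1]
    have hcard : ({f₁ v, f₂ v, f₃ v} : Finset V).card = 3 := by
      rw [Finset.card_insert_of_notMem, Finset.card_insert_of_notMem, Finset.card_singleton]
      · simp [Ne.symm h3.2.2]
      · simp [Ne.symm h2.2, Ne.symm h3.2.1]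
    have := Finset.eq_of_subset_of_card_le hsub (by rw [hrow₀ v, hcard])
    simpa using this
  · intro u p
    have key : ∀ f : V → V, Function.Injective f → ∃! v, f v = u := by
      intro f hf
      obtain ⟨v, hv⟩ := Finite.surjective_of_injective hf u
      exact ⟨v, hv, fun y hy => hf (hy.trans hv.symm)⟩
    fin_cases p
    · exact ⟨u, rfl, fun y hy => hy⟩
    · exact key f₁ hinj₁
    · exact key f₂ hinj₂
    · exact key f₃ hinj₃
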